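/- Let G be a totally disconnected locally compact group that is a SIN group (has a base of identity neighbourhoods consisting of open normal subgroups), and let K be a closed subgroup of G. Then K is the intersection of the open subgroups of G that contain K as a cocompact subgroup. -/

import Mathlib

open Topology Pointwise

/-- Let `G` be a totally disconnected locally compact SIN group (every identity
neighbourhood contains an open normal subgroup of `G`) and `K` a closed subgroup.  Then
`K` is the intersection of the open subgroups of `G` containing `K` as a cocompact
subgroup. -/
theorem closed_subgroup_eq_iInter_open_cocompact {G : Type*} [Group G] [TopologicalSpace G]
    [IsTopologicalGroup G] [LocallyCompactSpace G] [TotallyDisconnectedSpace G] [T2Space G]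
    (hSIN : ∀ V ∈ 𝓝 (1 : G), ∃ N : Subgroup G, N.Normal ∧ IsOpen (N : Set G) ∧
      (N : Set G) ⊆ V)
    (K : Subgroup G) (hK : IsClosed (K : Set G)) :
    (K : Set G) = ⋂ W ∈ {W : Subgroup G | IsOpen (W : Set G) ∧ K ≤ W ∧
      CompactSpace (W ⧸ K.subgroupOf W)}, (W : Set G) := by
  apply subset_antisymm
  · intro x hx
    exact Set.mem_iInter₂.mpr fun W hW => hW.2.1 hx
  · intro g hg
    by_contra hgK
    -- `V` : neighbourhood of 1 with `V * g ⊆ Kᶜ`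
    have hV : {x : G | x * g ∈ (K : Set G)ᶜ} ∈ 𝓝 (1 : G) := by
      have h1 : ContinuousAt (fun x : G => x * g) 1 := (continuous_mul_right g).continuousAt
      have := h1.preimage_mem_nhds (by
        simpa using hK.isOpen_compl.mem_nhds (by simpa using hgK))
      exact this
    -- compact neighbourhood of 1
    obtain ⟨C, hCcomp, hCnhds⟩ := exists_compact_mem_nhds (1 : G)
    obtain ⟨N, hNnorm, hNopen, hNsub⟩ := hSIN _ (Filter.inter_mem hCnhds hV)
    have hNV : (N : Set G) ⊆ {x : G | x * g ∈ (K : Set G)ᶜ} :=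
      fun x hx => (hNsub hx).2
    have hNcomp : IsCompact (N : Set G) :=
      hCcomp.of_isClosed_subset (N.isClosed_of_isOpen hNopen) fun x hx => (hNsub hx).1
    set W : Subgroup G := N ⊔ K with hWdef
    have hKW : K ≤ W := le_sup_right
    have hNW : N ≤ W := le_sup_left
    have hWopen : IsOpen (W : Set G) := Subgroup.isOpen_mono hNW hNopen
    have hWset : (W : Set G) = (N : Set G) * (K : Set G) := by
      haveI := hNnorm
      rw [hWdef]
      exact Eq.symm (Subgroup.normal_mul N K).symm
    -- W/K is compact: the compact set N surjects onto the quotient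
    haveI : CompactSpace ↥(N : Set G) := isCompact_iff_compactSpace.mp hNcomp
    have hWcompact : CompactSpace (W ⧸ K.subgroupOf W) := by
      let f : ↥(N : Set G) → W ⧸ K.subgroupOf W :=
        fun n => QuotientGroup.mk ⟨(n : G), hNW n.2⟩
      have hfc : Continuous f :=
        continuous_quot_mk.comp (Continuous.subtype_mk continuous_subtype_val _)
      have hfs : Function.Surjective f := by
        intro q
        induction q using QuotientGroup.induction_on with
        | H w =>
          have hw : (w : G) ∈ (N : Set G) * (K : Set G) := by
            rw [← hWset]; exact w.2
          obtain ⟨n, hn, k, hk, hnk⟩ := hw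
          refine ⟨⟨n, hn⟩, ?_⟩
          show QuotientGroup.mk _ = QuotientGroup.mk w
          rw [QuotientGroup.eq]
          simp only [Subgroup.mem_subgroupOf, Subgroup.coe_mul, Subgroup.coe_inv]
          show n⁻¹ * (w : G) ∈ K
          rw [← hnk]
          simpa using hk
      constructor
      rw [← Set.range_eq_univ.mpr hfs]
      exact isCompact_range hfc
    have hmem : g ∈ (W : Set G) := Set.mem_iInter₂.mp hg W ⟨hWopen, hKW, hWcompact⟩
    rw [hWset] at hmem
    obtain ⟨n, hn, k, hk, hnk⟩ := hmem
    have : n⁻¹ * g ∈ (K : Set G)ᶜ := by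
      have := hNV (N.inv_mem hn)
      simpa [mul_comm] using this
    apply this
    have : n⁻¹ * g = k := by rw [← hnk]; group
    rw [this]; exact hk
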